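/- arXiv:2203.01237 — 2 statements merged into one kernel-verified Lean document; each statement's English description precedes it below -/
import Mathlib

section
/- Let φ be a ¬-free formula (a formula of biL_{□,◇}) and F a crisp frame. Then F ⊨_{KbiG} φ if and only if F ⊨_{KG²} φ. (KG² is conservative over KbiG on crisp frames.) -/
/- Truth values: the real unit interval [0,1] with its complete lattice structure
   (so `sInf ∅ = 1` and `sSup ∅ = 0`). -/
instance : Fact ((0:ℝ) ≤ 1) := ⟨zero_le_one⟩

abbrev TV : Type := unitInterval

/-- Gödel implication: `a →G b = 1` if `a ≤ b`, else `b`. -/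
noncomputable def gimp (a b : TV) : TV := if a ≤ b then 1 else b

/-- Gödel coimplication: `a ⧀G b = 0` if `a ≤ b`, else `a`. -/
noncomputable def gcoimp (a b : TV) : TV := if a ≤ b then 0 else a

/-- Formulas of `biL¬_{□,◇}` over the countable variable set `ℕ`. -/
inductive Formula : Type
  | var : ℕ → Formula
  | neg : Formula → Formula
  | and : Formula → Formula → Formula
  | or : Formula → Formula → Formula
  | imp : Formula → Formula → Formula
  | coimp : Formula → Formula → Formula
  | box : Formula → Formula
  | dia : Formula → Formula

/-- KG² valuation pair `(v₁, v₂)` on a crisp frame `(W, R)`: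
`(kval R v φ w).1 = v₁(φ,w)` and `(kval R v φ w).2 = v₂(φ,w)`. -/
noncomputable def kval {W : Type} (R : W → W → Prop) (v : ℕ → W → TV × TV) :
    Formula → W → TV × TV
  | .var p, w => v p w
  | .neg φ, w => ((kval R v φ w).2, (kval R v φ w).1)
  | .and φ ψ, w => ((kval R v φ w).1 ⊓ (kval R v ψ w).1, (kval R v φ w).2 ⊔ (kval R v ψ w).2)
  | .or φ ψ, w => ((kval R v φ w).1 ⊔ (kval R v ψ w).1, (kval R v φ w).2 ⊓ (kval R v ψ w).2)
  | .imp φ ψ, w =>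
      (gimp (kval R v φ w).1 (kval R v ψ w).1, gcoimp (kval R v ψ w).2 (kval R v φ w).2)
  | .coimp φ ψ, w =>
      (gcoimp (kval R v φ w).1 (kval R v ψ w).1, gimp (kval R v ψ w).2 (kval R v φ w).2)
  | .box φ, w =>
      (sInf ((fun w' => (kval R v φ w').1) '' {w' | R w w'}),
       sSup ((fun w' => (kval R v φ w').2) '' {w' | R w w'}))
  | .dia φ, w =>
      (sSup ((fun w' => (kval R v φ w').1) '' {w' | R w w'}),
       sInf ((fun w' => (kval R v φ w').2) '' {w' | R w w'}))

/-- ¬-free formulas: the language `biL_{□,◇}` over the countable variable set `ℕ`. -/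
inductive FormulaB : Type
  | var : ℕ → FormulaB
  | and : FormulaB → FormulaB → FormulaB
  | or : FormulaB → FormulaB → FormulaB
  | imp : FormulaB → FormulaB → FormulaB
  | coimp : FormulaB → FormulaB → FormulaB
  | box : FormulaB → FormulaB
  | dia : FormulaB → FormulaB

/-- KbiG valuation on a crisp frame `(W, R)` (`inf ∅ = 1`, `sup ∅ = 0`). -/
noncomputable def bval {W : Type} (R : W → W → Prop) (v : ℕ → W → TV) :
    FormulaB → W → TV
  | .var p, w => v p w
  | .and φ ψ, w => bval R v φ w ⊓ bval R v ψ w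
  | .or φ ψ, w => bval R v φ w ⊔ bval R v ψ w
  | .imp φ ψ, w => gimp (bval R v φ w) (bval R v ψ w)
  | .coimp φ ψ, w => gcoimp (bval R v φ w) (bval R v ψ w)
  | .box φ, w => sInf ((fun w' => bval R v φ w') '' {w' | R w w'})
  | .dia φ, w => sSup ((fun w' => bval R v φ w') '' {w' | R w w'})

/-- Embedding of the ¬-free language `biL_{□,◇}` into `biL¬_{□,◇}`. -/
def FormulaB.emb : FormulaB → Formula
  | .var p => .var p
  | .and φ ψ => .and φ.emb ψ.emb
  | .or φ ψ => .or φ.emb ψ.emb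
  | .imp φ ψ => .imp φ.emb ψ.emb
  | .coimp φ ψ => .coimp φ.emb ψ.emb
  | .box φ => .box φ.emb
  | .dia φ => .dia φ.emb


open unitInterval in
lemma symm_sInf (S : Set TV) : σ (sInf S) = sSup (σ '' S) := by
  apply le_antisymm
  · rw [← symm_symm (sSup _), symm_le_symm]
    apply le_sInf
    intro x hx
    rw [← symm_symm x, symm_le_symm]
    exact le_sSup ⟨x, hx, rfl⟩
  · apply sSup_le
    rintro _ ⟨x, hx, rfl⟩
    rw [symm_le_symm]
    exact sInf_le hx

open unitInterval in
lemma symm_sSup (S : Set TV) : σ (sSup S) = sInf (σ '' S) := by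
  have h := symm_sInf (σ '' S)
  rw [Set.image_image] at h
  simp only [symm_symm, Set.image_id'] at h
  rw [← h, symm_symm]

open unitInterval in
lemma symm_inf (a b : TV) : σ (a ⊓ b) = σ a ⊔ σ b := by
  rcases le_total a b with h | h
  · rw [inf_eq_left.2 h, sup_eq_left.2 (symm_le_symm.2 h)]
  · rw [inf_eq_right.2 h, sup_eq_right.2 (symm_le_symm.2 h)]

open unitInterval in
lemma symm_sup (a b : TV) : σ (a ⊔ b) = σ a ⊓ σ b := by
  rw [← symm_symm (σ a ⊓ σ b), symm_inf, symm_symm, symm_symm]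

open unitInterval in
lemma symm_gimp (a b : TV) : σ (gimp a b) = gcoimp (σ b) (σ a) := by
  unfold gimp gcoimp
  by_cases h : a ≤ b
  · simp [h, symm_le_symm.2 h]
  · simp [h, fun hc => h (symm_le_symm.1 hc)]

open unitInterval in
lemma symm_gcoimp (a b : TV) : σ (gcoimp a b) = gimp (σ b) (σ a) := by
  unfold gimp gcoimp
  by_cases h : a ≤ b
  · simp [h, symm_le_symm.2 h]
  · simp [h, fun hc => h (symm_le_symm.1 hc)]

lemma kval_fst {W : Type} (R : W → W → Prop) (v : ℕ → W → TV × TV)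
    (φ : FormulaB) (w : W) :
    (kval R v φ.emb w).1 = bval R (fun p w => (v p w).1) φ w := by
  induction φ generalizing w with
  | var p => rfl
  | and φ ψ ihφ ihψ => simp [FormulaB.emb, kval, bval, ihφ, ihψ]
  | or φ ψ ihφ ihψ => simp [FormulaB.emb, kval, bval, ihφ, ihψ]
  | imp φ ψ ihφ ihψ => simp [FormulaB.emb, kval, bval, ihφ, ihψ]
  | coimp φ ψ ihφ ihψ => simp [FormulaB.emb, kval, bval, ihφ, ihψ]
  | box φ ih =>
      simp only [FormulaB.emb, kval, bval]
      congr 1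
      ext x; constructor
      · rintro ⟨w', hw', rfl⟩; exact ⟨w', hw', (ih w').symm⟩
      · rintro ⟨w', hw', rfl⟩; exact ⟨w', hw', ih w'⟩
  | dia φ ih =>
      simp only [FormulaB.emb, kval, bval]
      congr 1
      ext x; constructor
      · rintro ⟨w', hw', rfl⟩; exact ⟨w', hw', (ih w').symm⟩
      · rintro ⟨w', hw', rfl⟩; exact ⟨w', hw', ih w'⟩

open unitInterval in
lemma kval_snd {W : Type} (R : W → W → Prop) (v : ℕ → W → TV × TV)
    (φ : FormulaB) (w : W) :
    (kval R v φ.emb w).2 = σ (bval R (fun p w => σ (v p w).2) φ w) := by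
  induction φ generalizing w with
  | var p => simp [FormulaB.emb, kval, bval]
  | and φ ψ ihφ ihψ => simp [FormulaB.emb, kval, bval, ihφ, ihψ, symm_inf]
  | or φ ψ ihφ ihψ => simp [FormulaB.emb, kval, bval, ihφ, ihψ, symm_sup]
  | imp φ ψ ihφ ihψ => simp [FormulaB.emb, kval, bval, ihφ, ihψ, symm_gimp]
  | coimp φ ψ ihφ ihψ => simp [FormulaB.emb, kval, bval, ihφ, ihψ, symm_gcoimp]
  | box φ ih =>
      simp only [FormulaB.emb, kval, bval, symm_sInf]
      congr 1
      rw [Set.image_image]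
      ext x; constructor
      · rintro ⟨w', hw', rfl⟩; exact ⟨w', hw', (ih w').symm⟩
      · rintro ⟨w', hw', rfl⟩; exact ⟨w', hw', ih w'⟩
  | dia φ ih =>
      simp only [FormulaB.emb, kval, bval, symm_sSup]
      congr 1
      rw [Set.image_image]
      ext x; constructor
      · rintro ⟨w', hw', rfl⟩; exact ⟨w', hw', (ih w').symm⟩
      · rintro ⟨w', hw', rfl⟩; exact ⟨w', hw', ih w'⟩

/-- for ¬-free `φ` and a crisp frame `F`, `F ⊨_{KbiG} φ` iff `F ⊨_{KG²} φ`. -/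
theorem stmt2 {W : Type} [Nonempty W] (R : W → W → Prop) (φ : FormulaB) :
    (∀ (v : ℕ → W → TV) (w : W), bval R v φ w = 1) ↔
    (∀ (v : ℕ → W → TV × TV) (w : W),
      (kval R v φ.emb w).1 = 1 ∧ (kval R v φ.emb w).2 = 0) := by
  constructor
  · intro h v w
    refine ⟨?_, ?_⟩
    · rw [kval_fst]; exact h _ w
    · rw [kval_snd, h _ w, unitInterval.symm_one]
  · intro h v w
    have := (h (fun p w => (v p w, 0)) w).1
    rwa [kval_fst] at this
end

section
/- Consider the KbiG model M on the crisp frame with worlds W = {1,2,3,…} and accessibility relation nRn' iff n' = n+1, with valuation v(p,n) = 1/(n+1) (and arbitrary values for other variables). Then for every n ∈ W: v(∼∼(p → ◇p), n) = 1 and v(∼∼(p ⧀ ◇p), n) = 1; in particular v(∼∼(p → ◇p) ∧ ∼∼(p ⧀ ◇p), n) = 1 at every world. -/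
/-- `𝟏 := p → p`. -/
def bone : FormulaB := .imp (.var 0) (.var 0)

/-- `𝟎 := p ⧀ p`. -/
def bzero : FormulaB := .coimp (.var 0) (.var 0)

/-- Gödel negation `∼φ := φ → 𝟎`. -/
def bnegG (φ : FormulaB) : FormulaB := .imp φ bzero

/-- Baaz delta `Δτ := ∼(𝟏 ⧀ τ)`. -/
def bDelta (τ : FormulaB) : FormulaB := bnegG (.coimp bone τ)

/-- The formula `𝟏 ⧀ ◇((p ⧀ q) ∧ q)` with `p := var 0`, `q := var 1`. -/
def phiFin : FormulaB := .coimp bone (.dia (.and (.coimp (.var 0) (.var 1)) (.var 1)))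

/-- `φ^≤ := ∼∼(p → ◇p)`. -/
def phiLe : FormulaB := bnegG (bnegG (.imp (.var 0) (.dia (.var 0))))

/-- `φ^> := ∼∼(p ⧀ ◇p)`. -/
def phiGt : FormulaB := bnegG (bnegG (.coimp (.var 0) (.dia (.var 0))))

/-- The value `1/(n+1) ∈ [0,1]` for `n ∈ {1,2,…}`. -/
noncomputable def pv (n : ℕ+) : TV :=
  ⟨1 / (((n : ℕ) : ℝ) + 1), by
    constructor
    · positivity
    · rw [div_le_one (by positivity)]
      have h : (1:ℝ) ≤ ((n : ℕ) : ℝ) := by exact_mod_cast n.one_le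
      linarith⟩

lemma bzero_val {W : Type} (R : W → W → Prop) (v : ℕ → W → TV) (w : W) :
    bval R v bzero w = 0 := by
  simp [bval, bzero, gcoimp]

lemma bnegG_val {W : Type} (R : W → W → Prop) (v : ℕ → W → TV) (w : W) (φ : FormulaB) :
    bval R v (bnegG φ) w = gimp (bval R v φ w) 0 := by
  show gimp _ (bval R v bzero w) = _
  rw [bzero_val]

lemma negneg_val {W : Type} (R : W → W → Prop) (v : ℕ → W → TV) (w : W) (φ : FormulaB)
    (h : ¬ bval R v φ w ≤ 0) : bval R v (bnegG (bnegG φ)) w = 1 := by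
  rw [bnegG_val, bnegG_val]
  unfold gimp
  rw [if_neg h, if_pos le_rfl]

/-- on the model with worlds `{1,2,…}`, `nRn' ↔ n' = n+1` and `v(p,n) = 1/(n+1)`
(other variables arbitrary), both `∼∼(p → ◇p)` and `∼∼(p ⧀ ◇p)` (and their conjunction)
get value `1` at every world. -/
theorem stmt8 (R : ℕ+ → ℕ+ → Prop) (hR : ∀ n n' : ℕ+, R n n' ↔ n' = n + 1)
    (v : ℕ → ℕ+ → TV) (hv : ∀ n : ℕ+, v 0 n = pv n) (n : ℕ+) :
    bval R v phiLe n = 1 ∧ bval R v phiGt n = 1 ∧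
    bval R v (.and phiLe phiGt) n = 1 := by
  have hset : {w' | R n w'} = {n + 1} := by
    ext w'; simp [hR]
  have hdia : bval R v (.dia (.var 0)) n = pv (n + 1) := by
    show sSup _ = _
    rw [hset]
    simp [bval, hv]
  have hlt : pv (n + 1) < pv n := by
    rw [← Subtype.coe_lt_coe]
    show (1:ℝ) / _ < 1 / _
    have h1 : (0:ℝ) < ((n:ℕ):ℝ) + 1 := by positivity
    push_cast
    apply one_div_lt_one_div_of_lt h1
    linarith
  have hpos : ¬ pv n ≤ 0 := by
    rw [not_le, ← Subtype.coe_lt_coe]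
    show (0:ℝ) < 1 / _
    positivity
  have hpos' : ¬ pv (n + 1) ≤ 0 := by
    rw [not_le, ← Subtype.coe_lt_coe]
    show (0:ℝ) < 1 / _
    positivity
  have h1 : bval R v phiLe n = 1 := by
    apply negneg_val
    show ¬ gimp (bval R v (.var 0) n) (bval R v (.dia (.var 0)) n) ≤ 0
    rw [hdia]; show ¬ gimp (v 0 n) _ ≤ 0
    rw [hv, gimp, if_neg (not_le.mpr hlt)]
    exact hpos'
  have h2 : bval R v phiGt n = 1 := by
    apply negneg_val
    show ¬ gcoimp (bval R v (.var 0) n) (bval R v (.dia (.var 0)) n) ≤ 0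
    rw [hdia]; show ¬ gcoimp (v 0 n) _ ≤ 0
    rw [hv, gcoimp, if_neg (not_le.mpr hlt)]
    exact hpos
  refine ⟨h1, h2, ?_⟩
  show bval R v phiLe n ⊓ bval R v phiGt n = 1
  rw [h1, h2]; simp
end
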